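/- Let G be a finite group with N = |G| and let N_k denote the number of elements of G of order k. The total number of 3-term arithmetic progressions in G (i.e., distinct three-element sets of the form {a, b·a, b²·a} with a, b ∈ G) equals N·N_3/6 + Σ_{k=4}^{N} N·N_k/2. -/

import Mathlib

open Finset

/-- A 3-term arithmetic progression in a group `G`: a set of three distinct
elements of the form `{a, b*a, b^2*a}` with `a b : G`. -/
def IsThreeAP {G : Type*} [Group G] [DecidableEq G] (s : Finset G) : Prop :=
  s.card = 3 ∧ ∃ a b : G, s = {a, b * a, b ^ 2 * a}

/-- The total number of 3-term arithmetic progressions in `G`. -/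
noncomputable def threeAPCount (G : Type*) [Group G] [Fintype G] [DecidableEq G] : ℕ :=
  Set.ncard {s : Finset G | IsThreeAP s}

/-- `N_k`: the number of elements of `G` of order `k`. -/
noncomputable def orderCount (G : Type*) [Group G] [Fintype G] (k : ℕ) : ℕ :=
  (Finset.univ.filter fun g : G => orderOf g = k).card

set_option linter.unusedSectionVars false
set_option maxHeartbeats 1000000

section ThreeAPAux

variable {G : Type*} [Group G] [Fintype G] [DecidableEq G]

/-- The candidate 3-AP determined by a pair `(a, b)`. -/
def apSet (p : G × G) : Finset G := {p.1, p.2 * p.1, p.2 ^ 2 * p.1}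

lemma three_le_orderOf_iff {b : G} : 3 ≤ orderOf b ↔ b ≠ 1 ∧ b ^ 2 ≠ 1 := by
  constructor
  · intro h
    refine ⟨?_, ?_⟩
    · rintro rfl; simp at h
    · intro h2
      have := Nat.le_of_dvd (by norm_num) (orderOf_dvd_of_pow_eq_one h2)
      omega
  · rintro ⟨h1, h2⟩
    by_contra h
    push_neg at h
    have hpos : 0 < orderOf b := orderOf_pos b
    have : orderOf b = 1 ∨ orderOf b = 2 := by omega
    rcases this with h' | h'
    · exact h1 (orderOf_eq_one_iff.mp h')
    · have := pow_orderOf_eq_one b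
      rw [h'] at this
      exact h2 this

lemma card_apSet {a b : G} (hb : 3 ≤ orderOf b) : (apSet (a, b)).card = 3 := by
  obtain ⟨hb1, hb2⟩ := three_le_orderOf_iff.mp hb
  have e1 : a ≠ b * a := fun h => hb1 (mul_right_cancel (show b * a = 1 * a by rw [one_mul, ← h]))
  have e2 : a ≠ b ^ 2 * a :=
    fun h => hb2 (mul_right_cancel (show b ^ 2 * a = 1 * a by rw [one_mul, ← h]))
  have e3 : b * a ≠ b ^ 2 * a := by
    intro h
    have hbb : b = b ^ 2 := mul_right_cancel h
    exact hb1 (mul_left_cancel (show b * 1 = b * b by rw [mul_one, ← pow_two, ← hbb])).symm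
  show ({a, b * a, b ^ 2 * a} : Finset G).card = 3
  rw [Finset.card_insert_of_notMem (by simp [e1, e2]),
    Finset.card_insert_of_notMem (by simp [e3]), Finset.card_singleton]

lemma card_apSet_iff {a b : G} : (apSet (a, b)).card = 3 ↔ 3 ≤ orderOf b := by
  refine ⟨?_, card_apSet⟩
  intro h
  by_contra hb
  rw [three_le_orderOf_iff] at hb
  push_neg at hb
  by_cases h1 : b = 1
  · subst h1
    simp [apSet] at h
  · have h2 : b ^ 2 = 1 := hb h1
    have : apSet (a, b) = {a, b * a} := by
      ext z
      simp only [apSet, h2, one_mul, Finset.mem_insert, Finset.mem_singleton]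
      tauto
    rw [this] at h
    have := Finset.card_insert_le a ({b * a} : Finset G)
    simp at this
    omega


lemma orderOf_sq_eq_three {b : G} (hb : orderOf b = 3) : orderOf (b ^ 2) = 3 := by
  have hb3 : b ^ 3 = 1 := by rw [← hb]; exact pow_orderOf_eq_one b
  obtain ⟨hb1, hb2⟩ := three_le_orderOf_iff.mp hb.ge
  have h6 : (b ^ 2) ^ 3 = 1 := by
    rw [show ((b : G) ^ 2) ^ 3 = (b ^ 3) ^ 2 by group, hb3, one_pow]
  have hdvd : orderOf (b ^ 2) ∣ 3 := orderOf_dvd_of_pow_eq_one h6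
  have hle : orderOf (b ^ 2) ≤ 3 := Nat.le_of_dvd (by norm_num) hdvd
  have hsq : (b ^ 2) ^ 2 = b := by
    rw [show ((b : G) ^ 2) ^ 2 = b ^ 3 * b by group, hb3, one_mul]
  have hge : 3 ≤ orderOf (b ^ 2) := three_le_orderOf_iff.mpr ⟨hb2, by rw [hsq]; exact hb1⟩
  omega

lemma fiber_three {a b : G} (hb : orderOf b = 3) :
    (Finset.univ.filter fun p : G × G => 3 ≤ orderOf p.2 ∧ apSet p = apSet (a, b)) =
      ({a, b * a, b ^ 2 * a} : Finset G) ×ˢ ({b, b ^ 2} : Finset G) := by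
  have hb3 : b ^ 3 = 1 := by rw [← hb]; exact pow_orderOf_eq_one b
  obtain ⟨hb1, hb2⟩ := three_le_orderOf_iff.mp hb.ge
  have hbinv : b⁻¹ = b ^ 2 := by
    rw [inv_eq_iff_mul_eq_one, show (b : G) * b ^ 2 = b ^ 3 by group, hb3]
  have hsq : (b ^ 2) ^ 2 = b := by
    rw [show ((b : G) ^ 2) ^ 2 = b ^ 3 * b by group, hb3, one_mul]
  ext ⟨x, c⟩
  simp only [Finset.mem_filter, Finset.mem_univ, true_and, Finset.mem_product,
    Finset.mem_insert, Finset.mem_singleton]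
  constructor
  · rintro ⟨hc, h⟩
    have hx : x = a ∨ x = b * a ∨ x = b ^ 2 * a := by
      have hx' : x ∈ apSet (a, b) := by rw [← h]; simp [apSet]
      simpa [apSet] using hx'
    have hcx : c * x = a ∨ c * x = b * a ∨ c * x = b ^ 2 * a := by
      have : c * x ∈ apSet (a, b) := by rw [← h]; simp [apSet]
      simpa [apSet] using this
    have hc1 : c ≠ 1 := (three_le_orderOf_iff.mp hc).1
    have hk : ∀ y z : G, c * y = z → c = z * y⁻¹ := fun y z hyz => by
      rw [← hyz, mul_inv_cancel_right]
    rcases hx with rfl | rfl | rfl <;> rcases hcx with h' | h' | h'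
    · exact absurd (by rw [hk _ _ h']; group) hc1
    · exact ⟨by tauto, Or.inl (by rw [hk _ _ h']; group)⟩
    · exact ⟨by tauto, Or.inr (by rw [hk _ _ h']; group)⟩
    · refine ⟨by tauto, Or.inr ?_⟩
      rw [hk _ _ h', show a * (b * a)⁻¹ = b⁻¹ by group, hbinv]
    · exact absurd (by rw [hk _ _ h']; group) hc1
    · exact ⟨by tauto, Or.inl (by rw [hk _ _ h']; group)⟩
    · refine ⟨by tauto, Or.inl ?_⟩
      rw [hk _ _ h', show a * (b ^ 2 * a)⁻¹ = (b⁻¹) ^ 2 by group, hbinv, hsq]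
    · refine ⟨by tauto, Or.inr ?_⟩
      rw [hk _ _ h', show b * a * (b ^ 2 * a)⁻¹ = b⁻¹ by group, hbinv]
    · exact absurd (by rw [hk _ _ h']; group) hc1
  · rintro ⟨hx, hc⟩
    have hred : ∀ y : G, b ^ 3 * y = y := fun y => by rw [hb3, one_mul]
    rcases hc with hc | hc <;> rw [hc] <;> clear hc
    · refine ⟨hb.ge, ?_⟩
      rcases hx with hx | hx | hx <;> rw [hx] <;> clear hx
      · have e1 : b * (b * a) = b ^ 2 * a := by rw [← mul_assoc, ← pow_two]
        have e2 : b ^ 2 * (b * a) = a := by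
          rw [show (b : G) ^ 2 * (b * a) = b ^ 3 * a by group, hred]
        ext z
        simp only [apSet, Finset.mem_insert, Finset.mem_singleton, e1, e2]
        tauto
      · have e1 : b * (b ^ 2 * a) = a := by
          rw [show (b : G) * (b ^ 2 * a) = b ^ 3 * a by group, hred]
        have e2 : b ^ 2 * (b ^ 2 * a) = b * a := by
          rw [show (b : G) ^ 2 * (b ^ 2 * a) = b ^ 3 * (b * a) by group, hred]
        ext z
        simp only [apSet, Finset.mem_insert, Finset.mem_singleton, e1, e2]
        tauto
    · refine ⟨(orderOf_sq_eq_three hb).ge, ?_⟩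
      rcases hx with hx | hx | hx <;> rw [hx] <;> clear hx
      · have e1 : (b ^ 2) ^ 2 * a = b * a := by rw [hsq]
        ext z
        simp only [apSet, Finset.mem_insert, Finset.mem_singleton, e1]
        tauto
      · have e1 : b ^ 2 * (b * a) = a := by
          rw [show (b : G) ^ 2 * (b * a) = b ^ 3 * a by group, hred]
        have e2 : (b ^ 2) ^ 2 * (b * a) = b ^ 2 * a := by
          rw [show ((b : G) ^ 2) ^ 2 * (b * a) = b ^ 3 * (b ^ 2 * a) by group, hred]
        ext z
        simp only [apSet, Finset.mem_insert, Finset.mem_singleton, e1, e2]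
        tauto
      · have e1 : b ^ 2 * (b ^ 2 * a) = b * a := by
          rw [show (b : G) ^ 2 * (b ^ 2 * a) = b ^ 3 * (b * a) by group, hred]
        have e2 : (b ^ 2) ^ 2 * (b ^ 2 * a) = a := by
          rw [show ((b : G) ^ 2) ^ 2 * (b ^ 2 * a) = b ^ 3 * (b ^ 3 * a) by group, hred, hred]
        ext z
        simp only [apSet, Finset.mem_insert, Finset.mem_singleton, e1, e2]
        tauto

lemma fiber_four {a b : G} (hb : 4 ≤ orderOf b) :
    (Finset.univ.filter fun p : G × G => 3 ≤ orderOf p.2 ∧ apSet p = apSet (a, b)) =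
      ({(a, b), (b ^ 2 * a, b⁻¹)} : Finset (G × G)) := by
  obtain ⟨hb1, hb2⟩ := three_le_orderOf_iff.mp (show 3 ≤ orderOf b by omega)
  have hb3 : b ^ 3 ≠ 1 := fun h => by
    have := Nat.le_of_dvd (by norm_num) (orderOf_dvd_of_pow_eq_one h)
    omega
  have e21 : b ^ 2 ≠ b := fun h =>
    hb1 (mul_left_cancel (show b * b = b * 1 by rw [mul_one, ← pow_two, h]))
  have einv1 : b⁻¹ ≠ b := fun h => by
    have : b ^ 2 = 1 := by rw [pow_two]; nth_rewrite 1 [← h]; exact inv_mul_cancel b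
    exact hb2 this
  have einv2 : b⁻¹ ≠ b ^ 2 := fun h =>
    hb3 (by rw [show (b : G) ^ 3 = b * b ^ 2 by group, ← h, mul_inv_cancel])
  ext ⟨x, c⟩
  simp only [Finset.mem_filter, Finset.mem_univ, true_and, Finset.mem_insert,
    Finset.mem_singleton, Prod.mk.injEq]
  constructor
  · rintro ⟨hc, h⟩
    have hx : x = a ∨ x = b * a ∨ x = b ^ 2 * a := by
      have hx' : x ∈ apSet (a, b) := by rw [← h]; simp [apSet]
      simpa [apSet] using hx'
    have hcx : c * x = a ∨ c * x = b * a ∨ c * x = b ^ 2 * a := by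
      have : c * x ∈ apSet (a, b) := by rw [← h]; simp [apSet]
      simpa [apSet] using this
    have hccx : c ^ 2 * x = a ∨ c ^ 2 * x = b * a ∨ c ^ 2 * x = b ^ 2 * a := by
      have : c ^ 2 * x ∈ apSet (a, b) := by rw [← h]; simp [apSet]
      simpa [apSet] using this
    have hc1 : c ≠ 1 := (three_le_orderOf_iff.mp hc).1
    have hk : ∀ y z : G, c * y = z → c = z * y⁻¹ := fun y z hyz => by
      rw [← hyz, mul_inv_cancel_right]
    have hcle : ∀ w : G, c = w → w ^ 2 = 1 → False := by
      rintro w rfl hw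
      have := Nat.le_of_dvd (by norm_num) (orderOf_dvd_of_pow_eq_one hw)
      omega
    rcases hx with hx | hx | hx <;> rw [hx] at hcx hccx ⊢ <;> clear hx <;>
      rcases hcx with h' | h' | h'
    -- x = a
    · exact absurd (by rw [hk _ _ h']; group) hc1
    · exact Or.inl ⟨rfl, by rw [hk _ _ h']; group⟩
    · -- c = b ^ 2 : contradiction via c^2 * a
      have hc' : c = b ^ 2 := by rw [hk _ _ h']; group
      subst hc'
      rcases hccx with h'' | h'' | h''
      · exact (hcle _ rfl (mul_right_cancel (show ((b^2)^2 : G) * a = 1 * a by rw [one_mul, h'']))).elim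
      · have h4 : ((b : G) ^ 2) ^ 2 = b := mul_right_cancel h''
        exact (hb3 (by rw [show (b : G) ^ 3 = b⁻¹ * (b ^ 2) ^ 2 by group, h4, inv_mul_cancel])).elim
      · have h4 : ((b : G) ^ 2) ^ 2 = b ^ 2 := mul_right_cancel h''
        exact (hb2 (by rw [show (b : G) ^ 2 = (b ^ 2)⁻¹ * ((b ^ 2) ^ 2 : G) by group, h4,
          inv_mul_cancel])).elim
    -- x = b * a
    · have hc' : c = b⁻¹ := by rw [hk _ _ h']; group
      subst hc'
      rcases hccx with h'' | h'' | h''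
      · rw [show ((b⁻¹ : G)) ^ 2 * (b * a) = b⁻¹ * a by group] at h''
        have : b⁻¹ = 1 := mul_right_cancel (show (b⁻¹ : G) * a = 1 * a by rw [one_mul, h''])
        exact (hb1 (inv_eq_one.mp this)).elim
      · rw [show ((b⁻¹ : G)) ^ 2 * (b * a) = b⁻¹ * a by group] at h''
        exact (einv1 (mul_right_cancel h'')).elim
      · rw [show ((b⁻¹ : G)) ^ 2 * (b * a) = b⁻¹ * a by group] at h''
        exact (einv2 (mul_right_cancel h'')).elim
    · exact absurd (by rw [hk _ _ h']; group) hc1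
    · have hc' : c = b := by rw [hk _ _ h']; group
      rw [hc'] at hccx
      rcases hccx with h'' | h'' | h''
      · rw [show (b : G) ^ 2 * (b * a) = b ^ 3 * a by group] at h''
        exact (hb3 (mul_right_cancel (show (b : G) ^ 3 * a = 1 * a by rw [one_mul, h'']))).elim
      · rw [show (b : G) ^ 2 * (b * a) = b ^ 3 * a by group] at h''
        have h4 : (b : G) ^ 3 = b := mul_right_cancel h''
        exact (hb2 (by rw [show (b : G) ^ 2 = b⁻¹ * b ^ 3 by group, h4, inv_mul_cancel])).elim
      · rw [show (b : G) ^ 2 * (b * a) = b ^ 3 * a by group] at h''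
        have h4 : (b : G) ^ 3 = b ^ 2 := mul_right_cancel h''
        exact (hb1 (by rw [show (b : G) = (b ^ 2)⁻¹ * b ^ 3 by group, h4, inv_mul_cancel])).elim
    -- x = b ^ 2 * a
    · have hc' : c = (b ^ 2)⁻¹ := by rw [hk _ _ h']; group
      subst hc'
      rcases hccx with h'' | h'' | h''
      · rw [show (((b : G) ^ 2)⁻¹) ^ 2 * (b ^ 2 * a) = (b ^ 2)⁻¹ * a by group] at h''
        have : ((b : G) ^ 2)⁻¹ = 1 :=
          mul_right_cancel (show ((b : G) ^ 2)⁻¹ * a = 1 * a by rw [one_mul, h''])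
        exact (hb2 (inv_eq_one.mp this)).elim
      · rw [show (((b : G) ^ 2)⁻¹) ^ 2 * (b ^ 2 * a) = (b ^ 2)⁻¹ * a by group] at h''
        have h4 : ((b : G) ^ 2)⁻¹ = b := mul_right_cancel h''
        exact (einv2 (inv_eq_iff_eq_inv.mp h4).symm).elim
      · rw [show (((b : G) ^ 2)⁻¹) ^ 2 * (b ^ 2 * a) = (b ^ 2)⁻¹ * a by group] at h''
        have h4 : ((b : G) ^ 2)⁻¹ = b ^ 2 := mul_right_cancel h''
        have hsq1 : ((b ^ 2)⁻¹ : G) ^ 2 = 1 := by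
          rw [pow_two]
          nth_rewrite 2 [h4]
          exact inv_mul_cancel _
        exact (hcle ((b ^ 2)⁻¹) rfl hsq1).elim
    · have hc' : c = b⁻¹ := by rw [hk _ _ h']; group
      exact Or.inr ⟨rfl, hc'⟩
    · exact absurd (by rw [hk _ _ h']; group) hc1
  · rintro (⟨hx, hc⟩ | ⟨hx, hc⟩) <;> rw [hx, hc]
    · exact ⟨by omega, rfl⟩
    · refine ⟨by rw [orderOf_inv]; omega, ?_⟩
      have e1 : b⁻¹ * (b ^ 2 * a) = b * a := by group
      have e2 : (b⁻¹) ^ 2 * (b ^ 2 * a) = a := by group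
      ext z
      simp only [apSet, Finset.mem_insert, Finset.mem_singleton, e1, e2]
      tauto

lemma fiber_three' {a b : G} (hb : orderOf b = 3) :
    (Finset.univ.filter fun p : G × G => orderOf p.2 = 3 ∧ apSet p = apSet (a, b)) =
      ({a, b * a, b ^ 2 * a} : Finset G) ×ˢ ({b, b ^ 2} : Finset G) := by
  have h1 := fiber_three (a := a) hb
  ext ⟨x, c⟩
  constructor
  · intro hp
    rw [← h1]
    simp only [Finset.mem_filter, Finset.mem_univ, true_and] at hp ⊢
    exact ⟨hp.1.ge, hp.2⟩
  · intro hp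
    have h2 : (x, c) ∈ Finset.univ.filter
        fun p : G × G => 3 ≤ orderOf p.2 ∧ apSet p = apSet (a, b) := by rw [h1]; exact hp
    simp only [Finset.mem_filter, Finset.mem_univ, true_and] at h2 ⊢
    refine ⟨?_, h2.2⟩
    have hc : c ∈ ({b, b ^ 2} : Finset G) := (Finset.mem_product.mp hp).2
    simp only [Finset.mem_insert, Finset.mem_singleton] at hc
    rcases hc with rfl | rfl
    · exact hb
    · exact orderOf_sq_eq_three hb

lemma fiber_four' {a b : G} (hb : 4 ≤ orderOf b) :
    (Finset.univ.filter fun p : G × G => 4 ≤ orderOf p.2 ∧ apSet p = apSet (a, b)) =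
      ({(a, b), (b ^ 2 * a, b⁻¹)} : Finset (G × G)) := by
  have h1 := fiber_four (a := a) hb
  ext ⟨x, c⟩
  constructor
  · intro hp
    rw [← h1]
    simp only [Finset.mem_filter, Finset.mem_univ, true_and] at hp ⊢
    exact ⟨by omega, hp.2⟩
  · intro hp
    have h2 : (x, c) ∈ Finset.univ.filter
        fun p : G × G => 3 ≤ orderOf p.2 ∧ apSet p = apSet (a, b) := by rw [h1]; exact hp
    simp only [Finset.mem_filter, Finset.mem_univ, true_and] at h2 ⊢
    refine ⟨?_, h2.2⟩
    simp only [Finset.mem_insert, Finset.mem_singleton, Prod.mk.injEq] at hp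
    rcases hp with ⟨_, rfl⟩ | ⟨_, rfl⟩
    · exact hb
    · rw [orderOf_inv]; exact hb

lemma card_triple_pair {a b : G} (hb : orderOf b = 3) :
    (({a, b * a, b ^ 2 * a} : Finset G) ×ˢ ({b, b ^ 2} : Finset G)).card = 6 := by
  have h3 : (({a, b * a, b ^ 2 * a} : Finset G)).card = 3 := card_apSet (a := a) hb.ge
  have hbne : b ∉ ({b ^ 2} : Finset G) := by
    simp only [Finset.mem_singleton]
    intro h
    have hb1 : b ≠ 1 := (three_le_orderOf_iff.mp hb.ge).1
    exact hb1 (mul_left_cancel (show b * b = b * 1 by rw [mul_one, ← pow_two, ← h]))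
  rw [Finset.card_product, h3, Finset.card_insert_of_notMem hbne, Finset.card_singleton]

lemma card_pair_four {a b : G} (hb : 4 ≤ orderOf b) :
    (({(a, b), (b ^ 2 * a, b⁻¹)} : Finset (G × G))).card = 2 := by
  have hne : (a, b) ≠ (b ^ 2 * a, b⁻¹) := by
    intro h
    have hbb : b = b⁻¹ := congrArg Prod.snd h
    have : b ^ 2 = 1 := by rw [pow_two]; nth_rewrite 2 [hbb]; exact mul_inv_cancel b
    have := Nat.le_of_dvd (by norm_num) (orderOf_dvd_of_pow_eq_one this)
    omega
  rw [Finset.card_insert_of_notMem (by simpa using hne), Finset.card_singleton]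

end ThreeAPAux

theorem threeAP_total_count (G : Type*) [Group G] [Fintype G] [DecidableEq G] :
    (threeAPCount G : ℝ) =
      (Fintype.card G : ℝ) * (orderCount G 3) / 6 +
        ∑ k ∈ Finset.Icc 4 (Fintype.card G),
          (Fintype.card G : ℝ) * (orderCount G k) / 2 := by
  classical
  set N := Fintype.card G with hN
  set P3 : Finset (G × G) := Finset.univ.filter (fun p => orderOf p.2 = 3) with hP3
  set P4 : Finset (G × G) := Finset.univ.filter (fun p => 4 ≤ orderOf p.2) with hP4
  set T3 : Finset (Finset G) := P3.image apSet with hT3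
  set T4 : Finset (Finset G) := P4.image apSet with hT4
  -- fiber cardinalities
  have fib3 : ∀ s ∈ T3, (P3.filter fun p => apSet p = s).card = 6 := by
    intro s hs
    obtain ⟨⟨a, b⟩, hab, rfl⟩ := Finset.mem_image.mp hs
    rw [hP3] at hab
    have hb : orderOf b = 3 := (Finset.mem_filter.mp hab).2
    rw [hP3, Finset.filter_filter, fiber_three' hb, card_triple_pair hb]
  have fib4 : ∀ s ∈ T4, (P4.filter fun p => apSet p = s).card = 2 := by
    intro s hs
    obtain ⟨⟨a, b⟩, hab, rfl⟩ := Finset.mem_image.mp hs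
    rw [hP4] at hab
    have hb : 4 ≤ orderOf b := (Finset.mem_filter.mp hab).2
    rw [hP4, Finset.filter_filter, fiber_four' hb, card_pair_four hb]
  -- counting P3, P4 via fibers
  have hcard3 : P3.card = T3.card * 6 := by
    rw [Finset.card_eq_sum_card_fiberwise (fun p hp => Finset.mem_image_of_mem apSet hp),
      Finset.sum_congr rfl fib3, Finset.sum_const, smul_eq_mul]
  have hcard4 : P4.card = T4.card * 2 := by
    rw [Finset.card_eq_sum_card_fiberwise (fun p hp => Finset.mem_image_of_mem apSet hp),
      Finset.sum_congr rfl fib4, Finset.sum_const, smul_eq_mul]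
  -- P3, P4 as products
  have hP3card : P3.card = N * orderCount G 3 := by
    have : P3 = Finset.univ ×ˢ (Finset.univ.filter fun g : G => orderOf g = 3) := by
      ext ⟨x, c⟩
      simp [hP3]
    rw [this, Finset.card_product, Finset.card_univ, orderCount]
  have hP4card : P4.card = N * (Finset.univ.filter fun g : G => 4 ≤ orderOf g).card := by
    have : P4 = Finset.univ ×ˢ (Finset.univ.filter fun g : G => 4 ≤ orderOf g) := by
      ext ⟨x, c⟩
      simp [hP4]
    rw [this, Finset.card_product, Finset.card_univ]
  have hM : (Finset.univ.filter fun g : G => 4 ≤ orderOf g).card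
      = ∑ k ∈ Finset.Icc 4 N, orderCount G k := by
    rw [Finset.card_eq_sum_card_fiberwise
      (f := fun g : G => orderOf g) (t := Finset.Icc 4 N) (fun g hg => by
        simp only [Finset.mem_coe, Finset.mem_filter] at hg
        exact Finset.mem_Icc.mpr ⟨hg.2, orderOf_le_card_univ⟩)]
    refine Finset.sum_congr rfl fun k hk => ?_
    have hk4 : 4 ≤ k := (Finset.mem_Icc.mp hk).1
    rw [Finset.filter_filter, orderCount]
    congr 1
    ext g
    simp only [Finset.mem_filter, Finset.mem_univ, true_and]
    constructor
    · exact fun h => h.2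
    · exact fun h => ⟨by omega, h⟩
  -- disjointness
  have hdisj : Disjoint T3 T4 := by
    rw [Finset.disjoint_left]
    intro s hs3 hs4
    obtain ⟨⟨a, b⟩, hab, heq⟩ := Finset.mem_image.mp hs3
    obtain ⟨⟨a', b'⟩, hab', heq'⟩ := Finset.mem_image.mp hs4
    rw [hP3] at hab; rw [hP4] at hab'
    have hb : orderOf b = 3 := (Finset.mem_filter.mp hab).2
    have hb' : 4 ≤ orderOf b' := (Finset.mem_filter.mp hab').2
    have hmem : (a', b') ∈ Finset.univ.filter
        fun p : G × G => 3 ≤ orderOf p.2 ∧ apSet p = apSet (a, b) := by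
      simp only [Finset.mem_filter, Finset.mem_univ, true_and]
      exact ⟨by omega, by rw [heq', ← heq]⟩
    rw [fiber_three hb] at hmem
    have hc : b' ∈ ({b, b ^ 2} : Finset G) := (Finset.mem_product.mp hmem).2
    simp only [Finset.mem_insert, Finset.mem_singleton] at hc
    rcases hc with rfl | rfl
    · omega
    · rw [orderOf_sq_eq_three hb] at hb'
      omega
  -- the union is the set of 3-APs
  have hchar : {s : Finset G | IsThreeAP s} = ↑(T3 ∪ T4) := by
    ext s
    simp only [Set.mem_setOf_eq, Finset.coe_union, Set.mem_union, Finset.mem_coe,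
      hT3, hT4, Finset.mem_image, hP3, hP4, Finset.mem_filter, Finset.mem_univ, true_and]
    constructor
    · rintro ⟨hcard, a, b, rfl⟩
      have hb : 3 ≤ orderOf b := card_apSet_iff.mp hcard
      rcases Nat.lt_or_ge (orderOf b) 4 with h | h
      · exact Or.inl ⟨(a, b), show orderOf b = 3 by omega, rfl⟩
      · exact Or.inr ⟨(a, b), h, rfl⟩
    · rintro (⟨⟨a, b⟩, hb, rfl⟩ | ⟨⟨a, b⟩, hb, rfl⟩)
      · exact ⟨card_apSet (le_of_eq (show (3:ℕ) = orderOf b from hb.symm)), a, b, rfl⟩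
      · exact ⟨card_apSet (le_trans (by norm_num) (show 4 ≤ orderOf b from hb)), a, b, rfl⟩
  have hcount : threeAPCount G = T3.card + T4.card := by
    rw [threeAPCount, hchar, Set.ncard_coe_finset, Finset.card_union_of_disjoint hdisj]
  -- final real computation
  have hB : T3.card * 6 = N * orderCount G 3 := by rw [← hcard3, hP3card]
  have hC : T4.card * 2 = N * ∑ k ∈ Finset.Icc 4 N, orderCount G k := by
    rw [← hcard4, hP4card, hM]
  have hB' : (T3.card : ℝ) = (N : ℝ) * (orderCount G 3) / 6 := by
    rw [eq_div_iff (by norm_num)]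
    exact_mod_cast hB
  have hC' : (T4.card : ℝ) = ((N : ℝ) * ∑ k ∈ Finset.Icc 4 N, (orderCount G k : ℝ)) / 2 := by
    rw [eq_div_iff (by norm_num)]
    exact_mod_cast hC
  rw [hcount]
  push_cast
  rw [hB', hC']
  congr 1
  rw [eq_comm]
  rw [show (∑ k ∈ Finset.Icc 4 N, (N : ℝ) * (orderCount G k) / 2)
      = (∑ k ∈ Finset.Icc 4 N, (N : ℝ) * (orderCount G k)) / 2 from (Finset.sum_div _ _ _).symm,
    ← Finset.mul_sum]
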